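/- Let q be odd, n even, and suppose the characteristic of F_q does not divide n. Then the number of vectors x ∈ F_q^n with Σ x_i² = 0 and Σ x_i ≠ 0 equals q^{n-2}(q−1) + χ((−1)^{n/2})(q−1)q^{(n−2)/2}, where χ is the quadratic character of F_q extended by χ(0)=0. -/

import Mathlib

open Finset

/-- The quadratic character of a finite field, with values in `ℤ` and `χ(0) = 0`. -/
def quadChar (F : Type*) [Field F] [Fintype F] [DecidableEq F] (a : F) : ℤ :=
  if a = 0 then 0 else if IsSquare a then 1 else -1

namespace CountIso

variable {F : Type*} [Field F] [Fintype F] [DecidableEq F]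

local notation "χ" => quadraticChar F

lemma quadChar_eq (a : F) : quadChar F a = χ a := by
  rw [quadraticChar_apply, quadraticCharFun, quadChar]

/-- number of solutions of x^2 = a, as an integer -/
lemma card_sq_eq (hF : ringChar F ≠ 2) (a : F) :
    ((Finset.univ.filter (fun x : F => x ^ 2 = a)).card : ℤ) = 1 + χ a := by
  have := quadraticChar_card_sqrts hF a
  rw [Set.toFinset_setOf] at this
  rw [this]; ring

lemma chi_conv (hF : ringChar F ≠ 2) (t : F) :
    ∑ a : F, χ a * χ (t - a)
      = if t = 0 then (Fintype.card F - 1 : ℤ) * χ (-1) else - χ (-1) := by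
  have key : ∀ a : F, χ a * χ (t - a) = χ (a * (t - a)) := fun a => (map_mul _ _ _).symm
  simp only [key]
  rw [← Finset.sum_erase_add _ _ (Finset.mem_univ (0:F))]
  rw [show χ (0 * (t - 0)) = 0 by simp]
  rw [add_zero]
  by_cases ht : t = 0
  · subst ht
    rw [if_pos rfl]
    have : ∀ a ∈ Finset.univ.erase (0:F), χ (a * (0 - a)) = χ (-1) := by
      intro a ha
      have ha0 : a ≠ 0 := Finset.ne_of_mem_erase ha
      have : a * (0 - a) = -1 * a ^ 2 := by ring
      rw [this, map_mul, quadraticChar_sq_one' ha0, mul_one]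
    rw [Finset.sum_congr rfl this, Finset.sum_const, Finset.card_erase_of_mem (Finset.mem_univ 0),
      Finset.card_univ]
    rw [nsmul_eq_mul, Nat.cast_sub Fintype.card_pos, Nat.cast_one, mul_comm]
  · rw [if_neg ht]
    have step : ∀ a ∈ Finset.univ.erase (0:F), χ (a * (t - a)) = χ (t / a - 1) := by
      intro a ha
      have ha0 : a ≠ 0 := Finset.ne_of_mem_erase ha
      have : a * (t - a) = a ^ 2 * (t / a - 1) := by field_simp
      rw [this, map_mul, quadraticChar_sq_one' ha0, one_mul]
    rw [Finset.sum_congr rfl step]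
    have := Finset.sum_nbij' (i := fun a => t / a - 1) (j := fun b => t / (b + 1))
      (s := Finset.univ.erase (0:F)) (t := Finset.univ.erase (-1:F))
      (f := fun a => χ (t / a - 1)) (g := fun b => χ b)
      (by intro a ha
          have ha0 : a ≠ 0 := Finset.ne_of_mem_erase ha
          simp only [Finset.mem_erase, Finset.mem_univ, and_true]
          intro h
          apply ht
          have : t / a = 0 := by linear_combination (norm := ring_nf) h
          field_simp at this; simpa using this)
      (by intro b hb
          have hb1 : b ≠ -1 := Finset.ne_of_mem_erase hb
          have : b + 1 ≠ 0 := fun h => hb1 (by linear_combination h)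
          simp only [Finset.mem_erase, Finset.mem_univ, and_true]
          exact div_ne_zero ht this)
      (by intro a ha
          have ha0 : a ≠ 0 := Finset.ne_of_mem_erase ha
          have h2 : t / a ≠ 0 := div_ne_zero ht ha0
          field_simp; rw [sub_add_cancel, div_self ht])
      (by intro b hb
          have hb1 : b ≠ -1 := Finset.ne_of_mem_erase hb
          have h1 : b + 1 ≠ 0 := fun h => hb1 (by linear_combination h)
          field_simp; ring)
      (fun a _ => rfl)
    rw [this]
    have : ∑ b ∈ Finset.univ.erase (-1:F), χ b
        = (∑ b : F, χ b) - χ (-1) := by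
      rw [← Finset.sum_erase_add _ _ (Finset.mem_univ (-1:F))]; ring
    rw [this, quadraticChar_sum_zero hF, zero_sub]

/-- sum of χ over all of F but one point -/
lemma chi_sum_erase (hF : ringChar F ≠ 2) (c : F) :
    ∑ a ∈ Finset.univ.erase c, χ a = - χ c := by
  have := Finset.sum_erase_add Finset.univ (fun a => χ a) (Finset.mem_univ c)
  rw [quadraticChar_sum_zero hF] at this
  linarith

lemma card_cons_split (m : ℕ) (p : F → (Fin m → F) → Prop) [∀ a x, Decidable (p a x)] :
    (Finset.univ.filter (fun y : Fin (m+1) → F => p (y 0) (fun i => y i.succ))).card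
      = ∑ a : F, (Finset.univ.filter (fun x : Fin m → F => p a x)).card := by
  classical
  rw [← Fintype.card_subtype]
  have e1 : {y : Fin (m+1) → F // p (y 0) (fun i => y i.succ)}
      ≃ {z : F × (Fin m → F) // p z.1 z.2} :=
    ((Fin.consEquiv (fun _ : Fin (m+1) => F)).symm.subtypeEquiv (fun y => Iff.rfl))
  rw [Fintype.card_congr e1,
    Fintype.card_congr (Equiv.subtypeProdEquivSigmaSubtype p), Fintype.card_sigma]
  exact Finset.sum_congr rfl fun a _ => Fintype.card_subtype _

/-- grouping a sum over squares -/
lemma sq_group (hF : ringChar F ≠ 2) (f : F → ℤ) :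
    ∑ x : F, f (x ^ 2) = ∑ a : F, (1 + χ a) * f a := by
  rw [← Finset.sum_fiberwise' Finset.univ (fun x : F => x ^ 2) f]
  refine Finset.sum_congr rfl fun a _ => ?_
  rw [Finset.sum_const, nsmul_eq_mul, card_sq_eq hF]

/-- the solution count for `∑ x i ^ 2 = t`, as an integer. -/
def NZ (F : Type*) [Field F] [Fintype F] [DecidableEq F] (n : ℕ) (t : F) : ℤ :=
  ((Finset.univ.filter (fun x : Fin n → F => ∑ i, x i ^ 2 = t)).card : ℤ)

lemma NZ_zero (t : F) : NZ F 0 t = if t = 0 then 1 else 0 := by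
  rw [NZ]
  by_cases ht : t = 0
  · subst ht
    rw [if_pos rfl]
    norm_cast
    rw [Finset.card_eq_one]
    exact ⟨fun i => i.elim0, by ext x; simp [Finset.eq_univ_iff_forall, funext_iff,
      Fin.forall_iff, Subsingleton.elim x fun i => i.elim0]⟩
  · rw [if_neg ht]
    norm_cast
    rw [Finset.card_eq_zero, Finset.filter_eq_empty_iff]
    intro x _
    simpa using fun h => ht h.symm

lemma NZ_total (n : ℕ) : ∑ t : F, NZ F n t = (Fintype.card F : ℤ) ^ n := by
  have := Finset.card_eq_sum_card_fiberwise
    (s := (Finset.univ : Finset (Fin n → F))) (t := Finset.univ)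
    (f := fun x => ∑ i, x i ^ 2) (fun x _ => Finset.mem_univ _)
  rw [Finset.card_univ, Fintype.card_fun] at this
  unfold NZ
  rw [← Nat.cast_sum, ← this, Fintype.card_fin]
  push_cast
  ring

lemma NZ_succ (hF : ringChar F ≠ 2) (m : ℕ) (t : F) :
    NZ F (m+1) t = ∑ a : F, (1 + χ a) * NZ F m (t - a) := by
  have h1 : (Finset.univ.filter (fun y : Fin (m+1) → F => ∑ i, y i ^ 2 = t))
      = (Finset.univ.filter (fun y : Fin (m+1) → F =>
          (fun (a : F) (x : Fin m → F) => ∑ i, x i ^ 2 = t - a ^ 2) (y 0) (fun (i : Fin m) => y i.succ))) := by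
    apply Finset.filter_congr
    intro y _
    rw [Fin.sum_univ_succ]
    constructor
    · intro h; rw [← h]; ring
    · intro h; rw [h]; ring
  rw [NZ, h1, card_cons_split m (fun (a : F) (x : Fin m → F) => ∑ i, x i ^ 2 = t - a ^ 2)]
  push_cast
  exact sq_group hF (fun a => NZ F m (t - a))

end CountIso

namespace Closed

variable {F : Type*} [Field F] [Fintype F] [DecidableEq F]

local notation "χ" => quadraticChar F
local notation "qZ" => ((Fintype.card F : ℤ))

open CountIso

lemma sum_shift (n : ℕ) (t : F) : ∑ a : F, NZ F n (t - a) = qZ ^ n := by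
  calc ∑ a : F, NZ F n (t - a) = ∑ b : F, NZ F n b :=
        Fintype.sum_equiv (Equiv.subLeft t) _ _ (fun a => rfl)
    _ = qZ ^ n := NZ_total n

lemma NZ_closed (hF : ringChar F ≠ 2) : ∀ k : ℕ,
    (∀ t : F, NZ F (2*k+1) t = qZ ^ (2*k) + (χ (-1))^k * χ t * qZ ^ k)
    ∧ (∀ t : F, NZ F (2*k+2) t
        = qZ ^ (2*k+1) + (χ (-1))^(k+1) * qZ ^ k * (if t = 0 then qZ - 1 else -1)) := by
  have hstep : ∀ (m : ℕ) (t : F), NZ F (m+1) t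
      = qZ ^ m + ∑ a : F, χ a * NZ F m (t - a) := by
    intro m t
    rw [NZ_succ hF m t]
    have : ∀ a : F, (1 + χ a) * NZ F m (t - a)
        = NZ F m (t - a) + χ a * NZ F m (t - a) := fun a => by ring
    rw [Finset.sum_congr rfl (fun a _ => this a), Finset.sum_add_distrib, sum_shift]
  intro k
  induction k with
  | zero =>
    constructor
    · intro t
      rw [show 2*0+1 = 0+1 from rfl, hstep 0 t]
      have : ∀ a : F, χ a * NZ F 0 (t - a) = if a = t then χ a else 0 := by
        intro a
        rw [NZ_zero]
        by_cases h : a = t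
        · subst h; simp
        · rw [if_neg (fun hh => h (sub_eq_zero.mp hh).symm)]
          rw [if_neg h, mul_zero]
      rw [Finset.sum_congr rfl (fun a _ => this a), Finset.sum_ite_eq' Finset.univ t]
      simp
    · intro t
      rw [show 2*0+2 = (2*0+1)+1 from rfl, hstep (2*0+1) t]
      have : ∀ a : F, χ a * NZ F (2*0+1) (t - a)
          = χ a * χ (t - a) + qZ ^ (2*0) * χ a := by
        intro a
        rw [show (2*0+1 : ℕ) = 0+1 from rfl, hstep 0 (t - a)]
        have : ∀ b : F, χ b * NZ F 0 (t - a - b) = if b = t - a then χ b else 0 := by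
          intro b
          rw [NZ_zero]
          by_cases h : b = t - a
          · subst h; simp
          · rw [if_neg (fun hh => h (sub_eq_zero.mp hh).symm)]
            rw [if_neg h, mul_zero]
        rw [Finset.sum_congr rfl (fun b _ => this b), Finset.sum_ite_eq' Finset.univ (t-a)]
        simp; ring
      rw [Finset.sum_congr rfl (fun a _ => this a), Finset.sum_add_distrib, chi_conv hF,
        ← Finset.mul_sum, quadraticChar_sum_zero hF]
      by_cases ht : t = 0 <;> simp [ht] <;> ring
  | succ k ih =>
    obtain ⟨ihodd, iheven⟩ := ih
    have hodd : ∀ t : F, NZ F (2*(k+1)+1) t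
        = qZ ^ (2*(k+1)) + (χ (-1))^(k+1) * χ t * qZ ^ (k+1) := by
      intro t
      rw [show 2*(k+1)+1 = (2*k+2)+1 from by ring, hstep (2*k+2) t]
      have : ∀ a : F, χ a * NZ F (2*k+2) (t - a)
          = qZ^(2*k+1) * χ a
            + (χ (-1))^(k+1) * qZ^k *
              ((if a = t then χ a * qZ else 0) + χ a * (-1)) := by
        intro a
        rw [iheven (t - a)]
        by_cases h : a = t
        · subst h; rw [sub_self, if_pos rfl, if_pos rfl]; ring
        · rw [if_neg (fun hh : t - a = 0 => h (sub_eq_zero.mp hh).symm), if_neg h]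
          ring
      rw [Finset.sum_congr rfl (fun a _ => this a), Finset.sum_add_distrib,
        ← Finset.mul_sum, quadraticChar_sum_zero hF, mul_zero, zero_add,
        ← Finset.mul_sum, Finset.sum_add_distrib, Finset.sum_ite_eq' Finset.univ t,
        ← Finset.sum_mul, quadraticChar_sum_zero hF, zero_mul, add_zero,
        if_pos (Finset.mem_univ t)]
      ring
    refine ⟨hodd, ?_⟩
    intro t
    rw [show 2*(k+1)+2 = (2*(k+1)+1)+1 from rfl, hstep (2*(k+1)+1) t]
    have : ∀ a : F, χ a * NZ F (2*(k+1)+1) (t - a)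
        = qZ^(2*(k+1)) * χ a + (χ (-1))^(k+1) * qZ^(k+1) * (χ a * χ (t - a)) := by
      intro a
      rw [hodd (t - a)]; ring
    rw [Finset.sum_congr rfl (fun a _ => this a), Finset.sum_add_distrib,
      ← Finset.mul_sum, quadraticChar_sum_zero hF, mul_zero, zero_add,
      ← Finset.mul_sum, chi_conv hF]
    by_cases ht : t = 0 <;> simp [ht] <;> ring

end Closed

namespace Wpart

variable {F : Type*} [Field F] [Fintype F] [DecidableEq F]

local notation "χ" => quadraticChar F
local notation "qZ" => ((Fintype.card F : ℤ))

open CountIso Closed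

/-- count of `∑ x i ^ 2 = t ∧ ∑ x i = s` -/
def UZ (F : Type*) [Field F] [Fintype F] [DecidableEq F] (n : ℕ) (s t : F) : ℤ :=
  ((Finset.univ.filter
    (fun x : Fin n → F => (∑ i, x i ^ 2 = t) ∧ (∑ i, x i = s))).card : ℤ)

lemma sum_const_add {n : ℕ} (x : Fin n → F) (c : F) :
    ∑ j, (x j + c) = (∑ j, x j) + (n : F) * c := by
  rw [Finset.sum_add_distrib, Finset.sum_const, Finset.card_univ, Fintype.card_fin, nsmul_eq_mul]

lemma sum_sq_add {n : ℕ} (x : Fin n → F) (c : F) :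
    ∑ j, (x j + c) ^ 2 = (∑ j, x j ^ 2) + 2 * c * (∑ j, x j) + (n : F) * c ^ 2 := by
  have h : ∀ j, (x j + c) ^ 2 = x j ^ 2 + (2 * c) * x j + c ^ 2 := fun j => by ring
  rw [Finset.sum_congr rfl (fun j _ => h j), Finset.sum_add_distrib, Finset.sum_add_distrib,
    ← Finset.mul_sum, Finset.sum_const, Finset.card_univ, Fintype.card_fin, nsmul_eq_mul]

lemma fiber_L (n : ℕ) (t : F) : NZ F n t = ∑ s : F, UZ F n s t := by
  have h := Finset.card_eq_sum_card_fiberwise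
    (s := Finset.univ.filter (fun x : Fin n → F => ∑ i, x i ^ 2 = t)) (t := Finset.univ)
    (f := fun x => ∑ i, x i) (fun x _ => Finset.mem_univ _)
  simp only [Finset.filter_filter] at h
  rw [NZ, h]
  push_cast
  rfl

lemma hyperplane_card (m : ℕ) (s : F) :
    ((Finset.univ.filter (fun x : Fin (m+1) → F => ∑ i, x i = s)).card : ℤ) = qZ ^ m := by
  have h := Finset.card_nbij'
    (s := Finset.univ.filter (fun x : Fin (m+1) → F => ∑ i, x i = s))
    (t := (Finset.univ : Finset (Fin m → F)))
    (i := fun y => Fin.tail y) (j := fun x => Fin.cons (s - ∑ i, x i) x)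
    (fun y _ => Finset.mem_univ _)
    (by intro x _
        simp only [Finset.mem_coe, Finset.mem_filter, Finset.mem_univ, true_and, Fin.sum_univ_succ,
          Fin.cons_zero, Fin.cons_succ]
        ring)
    (by intro y hy
        rw [Finset.mem_coe, Finset.mem_filter] at hy
        have h2 := hy.2
        rw [Fin.sum_univ_succ] at h2
        show Fin.cons (s - ∑ i : Fin m, Fin.tail y i) (Fin.tail y) = y
        have h0 : s - ∑ i : Fin m, Fin.tail y i = y 0 := by
          have he : ∑ i : Fin m, Fin.tail y i = ∑ i : Fin m, y i.succ := rfl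
          rw [he]
          linear_combination -h2
        rw [h0, Fin.cons_self_tail])
    (by intro x _
        exact Fin.tail_cons _ _)
  rw [h, Finset.card_univ, Fintype.card_fun, Fintype.card_fin]
  push_cast
  rfl

lemma UZ_total (m : ℕ) (s : F) : ∑ b : F, UZ F (m+1) s b = qZ ^ m := by
  have h := Finset.card_eq_sum_card_fiberwise
    (s := Finset.univ.filter (fun x : Fin (m+1) → F => ∑ i, x i = s)) (t := Finset.univ)
    (f := fun x => ∑ i, x i ^ 2) (fun x _ => Finset.mem_univ _)
  simp only [Finset.filter_filter] at h
  rw [← hyperplane_card m s, h]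
  push_cast
  refine Finset.sum_congr rfl fun b _ => ?_
  rw [UZ]
  norm_cast
  exact Finset.card_nbij' id id (fun x hx => by simpa [and_comm] using hx) (fun x hx => by simpa [and_comm] using hx)
    (fun _ _ => rfl) (fun _ _ => rfl)

lemma UZ_translate {n : ℕ} (hn : ((n : ℕ) : F) ≠ 0) (s t : F) :
    UZ F n s t = UZ F n 0 (t - s ^ 2 / (n : F)) := by
  unfold UZ
  norm_cast
  apply Finset.card_nbij'
    (i := fun x => fun j => x j + (-(s / (n : F))))
    (j := fun y => fun j => y j + (s / (n : F)))
  · intro x hx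
    rw [Finset.mem_coe, Finset.mem_filter] at hx ⊢
    obtain ⟨-, hQ, hL⟩ := hx
    refine ⟨Finset.mem_univ _, ?_, ?_⟩
    · rw [sum_sq_add, hQ, hL]
      field_simp
      ring
    · rw [sum_const_add, hL]
      field_simp
      try ring
  · intro y hy
    rw [Finset.mem_coe, Finset.mem_filter] at hy ⊢
    obtain ⟨-, hQ, hL⟩ := hy
    refine ⟨Finset.mem_univ _, ?_, ?_⟩
    · rw [sum_sq_add, hQ, hL]
      field_simp
      ring
    · rw [sum_const_add, hL]
      field_simp
      try ring
  · intro x _; funext j; ring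
  · intro y _; funext j; ring

lemma group_sq_div (hF : ringChar F ≠ 2) {c : F} (hc : c ≠ 0) (f : F → ℤ) :
    ∑ s : F, f (s ^ 2 / c) = ∑ a : F, (1 + χ (c * a)) * f a := by
  rw [← Finset.sum_fiberwise' Finset.univ (fun s : F => s ^ 2 / c) f]
  refine Finset.sum_congr rfl fun a _ => ?_
  rw [Finset.sum_const, nsmul_eq_mul]
  congr 1
  rw [← card_sq_eq hF (c * a)]
  norm_cast
  apply Finset.card_nbij' id id
  · intro x hx
    simp only [Finset.mem_coe, Finset.mem_filter, Finset.mem_univ, true_and, id_eq] at hx ⊢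
    rw [div_eq_iff hc] at hx
    linear_combination hx
  · intro x hx
    simp only [Finset.mem_coe, Finset.mem_filter, Finset.mem_univ, true_and, id_eq] at hx ⊢
    rw [div_eq_iff hc]
    linear_combination hx
  · intro x _; rfl
  · intro x _; rfl

lemma NZ_eq_W (hF : ringChar F ≠ 2) (m : ℕ) (hn : ((m + 1 : ℕ) : F) ≠ 0) (t : F) :
    NZ F (m+1) t = qZ ^ m
      + χ ((m + 1 : ℕ) : F) * ∑ a : F, χ (t - a) * UZ F (m+1) 0 a := by
  rw [fiber_L]
  have step1 : ∀ s : F, UZ F (m+1) s t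
      = (fun a => UZ F (m+1) 0 (t - a)) (s ^ 2 / ((m + 1 : ℕ) : F)) := by
    intro s
    exact UZ_translate hn s t
  rw [Finset.sum_congr rfl (fun s _ => step1 s)]
  have hg := group_sq_div hF hn (fun a => UZ F (m+1) 0 (t - a))
  rw [hg]
  have expand : ∀ a : F, (1 + χ (((m + 1 : ℕ) : F) * a)) * UZ F (m+1) 0 (t - a)
      = UZ F (m+1) 0 (t - a)
        + χ ((m + 1 : ℕ) : F) * (χ a * UZ F (m+1) 0 (t - a)) := by
    intro a
    rw [map_mul]
    ring
  rw [Finset.sum_congr rfl (fun a _ => expand a), Finset.sum_add_distrib, ← Finset.mul_sum]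
  congr 1
  · calc ∑ a : F, UZ F (m+1) 0 (t - a) = ∑ b : F, UZ F (m+1) 0 b :=
        Fintype.sum_equiv (Equiv.subLeft t) _ _ (fun a => rfl)
      _ = qZ ^ m := UZ_total m 0
  · congr 1
    calc ∑ a : F, χ a * UZ F (m+1) 0 (t - a)
        = ∑ b : F, χ (t - b) * UZ F (m+1) 0 b := by
          refine Fintype.sum_equiv (Equiv.subLeft t) _ _ (fun a => ?_)
          simp only [Equiv.subLeft_apply]
          rw [show t - (t - a) = a by ring]
      _ = _ := rfl

end Wpart

namespace Final

variable {F : Type*} [Field F] [Fintype F] [DecidableEq F]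

local notation "χ" => quadraticChar F
local notation "qZ" => ((Fintype.card F : ℤ))

open CountIso Closed Wpart

lemma W0_eq (hF : ringChar F ≠ 2) (k : ℕ) (hn : ((2*k+2 : ℕ) : F) ≠ 0) :
    UZ F (2*k+2) 0 0 = qZ ^ (2*k) := by
  set n : ℕ := 2*k+2 with hn_def
  have closed := (NZ_closed hF k).2
  have key : ∀ t : F, NZ F n t
      = qZ ^ (2*k+1) + χ ((n : ℕ) : F) * ∑ a : F, χ (t - a) * UZ F n 0 a := by
    intro t
    exact NZ_eq_W hF (2*k+1) hn t
  -- the sum S computed two ways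
  have hS0 : ∑ t : F, χ (-t) * (NZ F n t - qZ ^ (2*k+1)) = 0 := by
    have hterm : ∀ t : F, χ (-t) * (NZ F n t - qZ ^ (2*k+1))
        = (-(χ (-1) ^ (k+1) * qZ ^ k)) * χ (-t) := by
      intro t
      rw [closed t]
      by_cases ht : t = 0
      · subst ht
        simp
      · rw [if_neg ht]; ring
    rw [Finset.sum_congr rfl (fun t _ => hterm t), ← Finset.mul_sum]
    have : ∑ t : F, χ (-t) = ∑ u : F, χ u :=
      Fintype.sum_equiv (Equiv.neg F) _ _ (fun t => rfl)
    rw [this, quadraticChar_sum_zero hF, mul_zero]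
  have hS1 : ∑ t : F, χ (-t) * (NZ F n t - qZ ^ (2*k+1))
      = χ ((n : ℕ) : F) * χ (-1) * (qZ * UZ F n 0 0 - qZ ^ (2*k+1)) := by
    have hterm : ∀ t : F, χ (-t) * (NZ F n t - qZ ^ (2*k+1))
        = χ ((n : ℕ) : F) * ∑ a : F, χ (-t) * χ (t - a) * UZ F n 0 a := by
      intro t
      rw [key t]
      rw [show qZ ^ (2*k+1) + χ ((n : ℕ) : F) * ∑ a : F, χ (t - a) * UZ F n 0 a
          - qZ ^ (2*k+1) = χ ((n : ℕ) : F) * ∑ a : F, χ (t - a) * UZ F n 0 a by ring]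
      simp only [Finset.mul_sum]
      exact Finset.sum_congr rfl fun a _ => by ring
    rw [Finset.sum_congr rfl (fun t _ => hterm t), ← Finset.mul_sum]
    rw [Finset.sum_comm]
    have inner : ∀ a : F, ∑ t : F, χ (-t) * χ (t - a) * UZ F n 0 a
        = (if a = 0 then (qZ - 1) * χ (-1) else - χ (-1)) * UZ F n 0 a := by
      intro a
      rw [← Finset.sum_mul]
      congr 1
      have step : ∑ t : F, χ (-t) * χ (t - a) = ∑ u : F, χ u * χ (-a - u) := by
        refine Fintype.sum_equiv (Equiv.neg F) _ _ (fun t => ?_)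
        simp only [Equiv.neg_apply]
        congr 2
        ring
      rw [step, chi_conv hF (-a)]
      simp [neg_eq_zero]
    rw [Finset.sum_congr rfl (fun a _ => inner a)]
    have split : ∀ a : F, (if a = 0 then (qZ - 1) * χ (-1) else - χ (-1)) * UZ F n 0 a
        = (- χ (-1)) * UZ F n 0 a
          + (if a = 0 then qZ * χ (-1) * UZ F n 0 a else 0) := by
      intro a
      by_cases h : a = 0
      · subst h; rw [if_pos rfl, if_pos rfl]; ring
      · rw [if_neg h, if_neg h]; ring
    rw [Finset.sum_congr rfl (fun a _ => split a), Finset.sum_add_distrib,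
      ← Finset.mul_sum, UZ_total (2*k+1) 0, Finset.sum_ite_eq' Finset.univ 0,
      if_pos (Finset.mem_univ (0:F))]
    ring
  rw [hS1] at hS0
  have hchi_n : χ ((n : ℕ) : F) ≠ 0 := fun h => hn (quadraticChar_eq_zero_iff.mp h)
  have hchi_neg : χ (-1) ≠ 0 := fun h =>
    (neg_ne_zero.mpr (one_ne_zero : (1:F) ≠ 0)) (quadraticChar_eq_zero_iff.mp h)
  have hq : qZ ≠ 0 := Nat.cast_ne_zero.mpr Fintype.card_ne_zero
  have hzero : qZ * UZ F n 0 0 - qZ ^ (2*k+1) = 0 := by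
    rcases mul_eq_zero.mp hS0 with h | h
    · rcases mul_eq_zero.mp h with h' | h'
      · exact absurd h' hchi_n
      · exact absurd h' hchi_neg
    · exact h
  have : qZ * UZ F n 0 0 = qZ * qZ ^ (2*k) := by
    rw [sub_eq_zero] at hzero
    rw [hzero, pow_succ]
    ring
  exact mul_left_cancel₀ hq this

end Final

open CountIso Closed Wpart Final in
theorem count_isotropic_nonzero_sum_even_char_not_dvd
    {F : Type*} [Field F] [Fintype F] [DecidableEq F] {q n : ℕ}
    (hcard : Fintype.card F = q) (hq : Odd q)
    (hneven : Even n) (hp : ¬ ringChar F ∣ n) :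
    (Set.ncard {x : Fin n → F | (∑ i, x i ^ 2) = 0 ∧ (∑ i, x i) ≠ 0} : ℤ)
      = (q : ℤ) ^ (n - 2) * (q - 1)
        + quadChar F ((-1 : F) ^ (n / 2)) * (q - 1) * (q : ℤ) ^ ((n - 2) / 2) := by
  subst hcard
  have hF2 : ringChar F ≠ 2 := by
    intro h
    have h2 := FiniteField.even_card_of_char_two h
    have h1 := Nat.odd_iff.mp hq
    omega
  have hn0 : n ≠ 0 := fun h => hp (h ▸ dvd_zero _)
  obtain ⟨j, hj⟩ := hneven
  obtain ⟨k, hk⟩ : ∃ k, n = 2*k+2 := ⟨j - 1, by omega⟩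
  subst hk
  have e1 : (2*k+2) / 2 = k+1 := by omega
  have e2 : (2*k+2) - 2 = 2*k := by omega
  have e3 : (2*k : ℕ) / 2 = k := by omega
  have hnF : ((2*k+2 : ℕ) : F) ≠ 0 := fun h => hp ((ringChar.spec F (2*k+2)).mp h)
  have hA := (NZ_closed hF2 k).2 (0 : F)
  have hB := W0_eq hF2 k hnF
  have hset : ({x : Fin (2*k+2) → F | (∑ i, x i ^ 2) = 0 ∧ (∑ i, x i) ≠ 0} : Set _).ncard
      = (Finset.univ.filter
          (fun x : Fin (2*k+2) → F => (∑ i, x i ^ 2) = 0 ∧ (∑ i, x i) ≠ 0)).card := by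
    rw [Set.ncard_eq_toFinset_card', Set.toFinset_setOf]
  have hsplit : (Finset.univ.filter
        (fun x : Fin (2*k+2) → F => (∑ i, x i ^ 2) = 0 ∧ (∑ i, x i) = 0)).card
      + (Finset.univ.filter
        (fun x : Fin (2*k+2) → F => (∑ i, x i ^ 2) = 0 ∧ (∑ i, x i) ≠ 0)).card
      = (Finset.univ.filter (fun x : Fin (2*k+2) → F => (∑ i, x i ^ 2) = 0)).card := by
    rw [← Finset.filter_filter, ← Finset.filter_filter]
    exact Finset.card_filter_add_card_filter_not
      (p := fun x : Fin (2*k+2) → F => (∑ i, x i) = 0)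
  have hmain : ((Finset.univ.filter
      (fun x : Fin (2*k+2) → F => (∑ i, x i ^ 2) = 0 ∧ (∑ i, x i) ≠ 0)).card : ℤ)
      = NZ F (2*k+2) 0 - UZ F (2*k+2) 0 0 := by
    rw [NZ, UZ, eq_sub_iff_add_eq]
    exact_mod_cast (Nat.add_comm _ _).trans hsplit
  rw [hset, hmain, hA, hB]
  have hqc : quadChar F ((-1 : F) ^ ((2*k+2) / 2)) = (quadraticChar F (-1))^(k+1) := by
    rw [quadChar_eq, e1, map_pow]
  rw [hqc, e2, e3, if_pos rfl]
  ring
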